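/- Let p be a prime and A = {1,…,p−1}. Then (1) D_{A,m}(C_p) = 2m for every m ∈ ℕ; and (2) D_{A,m}(C_p^2) = 3m for m ≤ ⌈p/3⌉ and D_{A,m}(C_p^2) = 2m + ⌈p/3⌉ for m > ⌈p/3⌉. -/

import Mathlib

open scoped BigOperators

/-- `l` encodes a `W`-weighted zero-subsum of the sequence (multiset) `S`:
a nonempty list of (weight, group element) pairs with weights in `W`, whose
group elements form a sub-multiset of `S` and whose weighted sum is zero. -/
def IsWZeroSubsum {G : Type*} [AddCommGroup G] (W : Set ℤ) (S : Multiset G)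
    (l : List (ℤ × G)) : Prop :=
  l ≠ [] ∧ (∀ p ∈ l, p.1 ∈ W) ∧ (↑(l.map Prod.snd) : Multiset G) ≤ S ∧
    (l.map fun p => p.1 • p.2).sum = 0

/-- `S` has a `W`-weighted zero-subsum whose length lies in `L`. -/
def HasWZeroSubsumLen {G : Type*} [AddCommGroup G] (W : Set ℤ) (S : Multiset G)
    (L : Set ℕ) : Prop :=
  ∃ l : List (ℤ × G), IsWZeroSubsum W S l ∧ l.length ∈ L

/-- `S` has `m` pairwise disjoint `W`-weighted zero-subsums. -/
def HasDisjointWZeroSubsums {G : Type*} [AddCommGroup G] (W : Set ℤ) (S : Multiset G)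
    (m : ℕ) : Prop :=
  ∃ ls : List (List (ℤ × G)), ls.length = m ∧
    (∀ l ∈ ls, l ≠ [] ∧ (∀ p ∈ l, p.1 ∈ W) ∧ (l.map fun p => p.1 • p.2).sum = 0) ∧
    (↑(ls.flatten.map Prod.snd) : Multiset G) ≤ S

/-- The `m`-wise `W`-weighted Davenport constant `D_{W,m}(G)`. -/
noncomputable def DW (W : Set ℤ) (G : Type*) [AddCommGroup G] (m : ℕ) : ℕ :=
  sInf {n : ℕ | ∀ S : Multiset G, n ≤ Multiset.card S → HasDisjointWZeroSubsums W S m}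

/-- The `L`-constrained `W`-weighted Davenport constant `s_{W,L}(G)`, valued in `ℕ∞`. -/
noncomputable def sWL (W : Set ℤ) (G : Type*) [AddCommGroup G] (L : Set ℕ) : ℕ∞ :=
  sInf {N : ℕ∞ | ∃ n : ℕ, N = (n : ℕ∞) ∧
    ∀ S : Multiset G, n ≤ Multiset.card S → HasWZeroSubsumLen W S L}

/-- The `d`-constrained `W`-weighted Davenport constant `s_{W,≤d}(G)`. -/
noncomputable def sWle (W : Set ℤ) (G : Type*) [AddCommGroup G] (d : ℕ) : ℕ∞ :=
  sWL W G {t | 1 ≤ t ∧ t ≤ d}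

/-- `e_W(G)`: the smallest `t ≥ 1` such that some `t` weights from `W` sum to a
multiple of `exp(G)`. -/
noncomputable def eW (W : Set ℤ) (G : Type*) [AddCommGroup G] : ℕ :=
  sInf {t : ℕ | 1 ≤ t ∧ ∃ w : Fin t → ℤ, (∀ i, w i ∈ W) ∧
    ((AddMonoid.exponent G : ℤ) ∣ ∑ i, w i)}

/-- `W` is multiplicatively closed modulo `n`. -/
def MulClosedMod (W : Set ℤ) (n : ℕ) : Prop :=
  ∀ w ∈ W, ∀ w' ∈ W, ∃ u ∈ W, (n : ℤ) ∣ w * w' - u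

namespace Stmt17Aux

def Wset (p : ℕ) : Set ℤ := Set.Icc 1 ((p : ℤ) - 1)

def Core {G : Type*} [AddCommGroup G] (W : Set ℤ) (l : List (ℤ × G)) : Prop :=
  l ≠ [] ∧ (∀ q ∈ l, q.1 ∈ W) ∧ (l.map fun q => q.1 • q.2).sum = 0

variable {p : ℕ} [hp : Fact p.Prime]

lemma wt_cast_ne_zero {w : ℤ} (hw : w ∈ Wset p) : ((w : ZMod p)) ≠ 0 := by
  rintro h
  rw [ZMod.intCast_zmod_eq_zero_iff_dvd] at h
  have h1 : (1 : ℤ) ≤ w := hw.1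
  have h2 : w ≤ (p : ℤ) - 1 := hw.2
  have := Int.le_of_dvd (by omega) h
  omega

lemma val_mem_Wset {c : ZMod p} (hc : c ≠ 0) : ((c.val : ℤ) ∈ Wset p) := by
  haveI : NeZero p := ⟨hp.out.pos.ne'⟩
  have h1 : c.val < p := ZMod.val_lt c
  have h2 : c.val ≠ 0 := by
    intro h; exact hc (by rw [← ZMod.natCast_zmod_val c, h, Nat.cast_zero])
  constructor
  · exact_mod_cast Nat.one_le_iff_ne_zero.mpr h2
  · omega

lemma val_cast_int {c : ZMod p} : (((c.val : ℤ) : ZMod p)) = c := by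
  haveI : NeZero p := ⟨hp.out.pos.ne'⟩
  push_cast
  exact ZMod.natCast_zmod_val c

variable {G : Type*} [AddCommGroup G] [Module (ZMod p) G]

lemma sum_filter_smul (L : List (ZMod p × G)) :
    ((L.filter fun q => q.1 ≠ 0).map fun q => q.1 • q.2).sum
      = (L.map fun q => q.1 • q.2).sum := by
  induction L with
  | nil => simp
  | cons q L ih =>
    by_cases h : q.1 = 0
    · simpa [List.filter_cons, h] using ih
    · simpa [List.filter_cons, h] using ih

lemma mkCore (L : List (ZMod p × G)) (hex : ∃ q ∈ L, q.1 ≠ 0)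
    (hsum : (L.map fun q => q.1 • q.2).sum = 0) :
    ∃ l : List (ℤ × G), Core (Wset p) l ∧
      (↑(l.map Prod.snd) : Multiset G) ≤ ↑(L.map Prod.snd) := by
  refine ⟨(L.filter fun q => q.1 ≠ 0).map fun q => ((q.1.val : ℤ), q.2), ⟨?_, ?_, ?_⟩, ?_⟩
  · obtain ⟨q, hq, hq1⟩ := hex
    intro h
    rw [List.map_eq_nil_iff] at h
    exact (by simpa using List.filter_eq_nil_iff.mp h q hq : ¬ q.1 ≠ 0) hq1
  · intro q hq
    simp only [List.mem_map] at hq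
    obtain ⟨q', hq', rfl⟩ := hq
    rw [List.mem_filter] at hq'
    exact val_mem_Wset (by simpa using hq'.2)
  · rw [List.map_map]
    have : ((fun q : ℤ × G => q.1 • q.2) ∘ fun q : ZMod p × G => ((q.1.val : ℤ), q.2))
        = fun q : ZMod p × G => q.1 • q.2 := by
      funext q
      show (q.1.val : ℤ) • q.2 = q.1 • q.2
      rw [← Int.cast_smul_eq_zsmul (ZMod p), val_cast_int]
    rw [this, sum_filter_smul, hsum]
  · rw [List.map_map]
    have h1 : ((L.filter fun q => q.1 ≠ 0).map
        (Prod.snd ∘ fun q : ZMod p × G => ((q.1.val : ℤ), q.2))) = (L.filter fun q => q.1 ≠ 0).map Prod.snd := rfl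
    rw [h1]
    exact Multiset.coe_le.mpr ((List.filter_sublist (l := L)).map Prod.snd).subperm


def cross (a b : Fin 2 → ZMod p) : ZMod p := a 0 * b 1 - a 1 * b 0

lemma vec_eq_zero {v : Fin 2 → ZMod p} (h0 : v 0 = 0) (h1 : v 1 = 0) : v = 0 := by
  funext i; fin_cases i <;> simpa

lemma vec_add_smul_eq_zero {a b : ZMod p} {g h : Fin 2 → ZMod p}
    (h0 : a * g 0 + b * h 0 = 0) (h1 : a * g 1 + b * h 1 = 0) : a • g + b • h = 0 := by
  apply vec_eq_zero <;> simpa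

lemma vec_add_smul3_eq_zero {a b c : ZMod p} {g h k : Fin 2 → ZMod p}
    (h0 : a * g 0 + b * h 0 + c * k 0 = 0) (h1 : a * g 1 + b * h 1 + c * k 1 = 0) :
    a • g + b • h + c • k = 0 := by
  apply vec_eq_zero <;> simpa

lemma dep2 {g h : Fin 2 → ZMod p} (hg : g ≠ 0) (hc : cross g h = 0) :
    ∃ a b : ZMod p, (a ≠ 0 ∨ b ≠ 0) ∧ a • g + b • h = 0 := by
  unfold cross at hc
  by_cases h0 : g 0 = 0
  · have h1 : g 1 ≠ 0 := fun h1 => hg (vec_eq_zero h0 h1)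
    refine ⟨h 1, -(g 1), Or.inr (by simpa using h1), ?_⟩
    apply vec_add_smul_eq_zero
    · linear_combination hc
    · ring
  · refine ⟨h 0, -(g 0), Or.inr (by simpa using h0), ?_⟩
    apply vec_add_smul_eq_zero
    · ring
    · linear_combination -hc

lemma dep3 (g h k : Fin 2 → ZMod p) :
    ∃ a b c : ZMod p, (a ≠ 0 ∨ b ≠ 0 ∨ c ≠ 0) ∧ a • g + b • h + c • k = 0 := by
  by_cases hg : g = 0
  · exact ⟨1, 0, 0, Or.inl one_ne_zero, by simp [hg]⟩
  by_cases hgh : cross g h = 0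
  · obtain ⟨a, b, hab, heq⟩ := dep2 hg hgh
    exact ⟨a, b, 0, by tauto, by simpa using heq⟩
  · refine ⟨cross h k, cross k g, cross g h, Or.inr (Or.inr hgh), ?_⟩
    unfold cross
    apply vec_add_smul3_eq_zero <;> ring



variable {G : Type*} [AddCommGroup G] [DecidableEq G] {W : Set ℤ}

omit [DecidableEq G] in
lemma hasDisj_zero (S : Multiset G) : HasDisjointWZeroSubsums W S 0 :=
  ⟨[], rfl, by simp, by simp⟩

lemma hasDisj_cons {S : Multiset G} {l : List (ℤ × G)} {m : ℕ}
    (hl : Core W l) (hle : (↑(l.map Prod.snd) : Multiset G) ≤ S)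
    (h : HasDisjointWZeroSubsums W (S - (↑(l.map Prod.snd) : Multiset G)) m) :
    HasDisjointWZeroSubsums W S (m + 1) := by
  obtain ⟨ls, hlen, hcore, hsub⟩ := h
  refine ⟨l :: ls, by simp [hlen], ?_, ?_⟩
  · intro l' hl'
    rcases List.mem_cons.mp hl' with rfl | h
    · exact hl
    · exact hcore l' h
  · have : (↑(ls.flatten.map Prod.snd) : Multiset G) + ↑(l.map Prod.snd) ≤ S :=
      (le_tsub_iff_right hle).mp hsub
    simpa [add_comm] using this

omit [AddCommGroup G] [DecidableEq G] in
lemma exists_cons_of_card_pos {S : Multiset G} (h : 1 ≤ Multiset.card S) :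
    ∃ g T, S = g ::ₘ T := by
  obtain ⟨g, hg⟩ := Multiset.card_pos_iff_exists_mem.mp h
  obtain ⟨T, hT⟩ := Multiset.exists_cons_of_mem hg
  exact ⟨g, T, hT⟩



lemma dep_zmod (g h : ZMod p) :
    ∃ a b : ZMod p, (a ≠ 0 ∨ b ≠ 0) ∧ a • g + b • h = 0 := by
  by_cases hg : g = 0
  · exact ⟨1, 0, Or.inl one_ne_zero, by simp [hg]⟩
  · refine ⟨h, -g, Or.inr (by simpa using hg), ?_⟩
    simp only [smul_eq_mul]
    ring

lemma UB_cp : ∀ (m : ℕ) (S : Multiset (ZMod p)), 2 * m ≤ Multiset.card S →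
    HasDisjointWZeroSubsums (Wset p) S m := by
  intro m
  induction m with
  | zero => exact fun S _ => hasDisj_zero S
  | succ m ih =>
    intro S hS
    obtain ⟨g, T, rfl⟩ := exists_cons_of_card_pos (S := S) (by omega)
    have hT : 1 ≤ Multiset.card T := by simp at hS; omega
    obtain ⟨h, T', rfl⟩ := exists_cons_of_card_pos hT
    obtain ⟨a, b, hab, heq⟩ := dep_zmod g h
    obtain ⟨l, hcore, hle⟩ := mkCore (p := p) [(a, g), (b, h)]
      (by rcases hab with ha | hb; exacts [⟨(a, g), by simp, ha⟩, ⟨(b, h), by simp, hb⟩])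
      (by simpa using heq)
    have hle2 : (↑(l.map Prod.snd) : Multiset (ZMod p)) ≤ g ::ₘ h ::ₘ T' := by
      refine hle.trans ?_
      simp only [List.map_cons, List.map_nil]
      exact (Multiset.cons_le_cons _ (Multiset.cons_le_cons _ (Multiset.zero_le _)))
    apply hasDisj_cons hcore hle2
    apply ih
    have hcard2 : Multiset.card (↑(l.map Prod.snd) : Multiset (ZMod p)) ≤ 2 := by
      simpa using Multiset.card_le_card hle
    rw [Multiset.card_sub hle2]
    simp only [Multiset.card_cons] at hS ⊢
    omega

lemma UB1 : ∀ (m : ℕ) (S : Multiset (Fin 2 → ZMod p)), 3 * m ≤ Multiset.card S →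
    HasDisjointWZeroSubsums (Wset p) S m := by
  intro m
  induction m with
  | zero => exact fun S _ => hasDisj_zero S
  | succ m ih =>
    intro S hS
    obtain ⟨g, T, rfl⟩ := exists_cons_of_card_pos (S := S) (by omega)
    obtain ⟨h, T', rfl⟩ := exists_cons_of_card_pos (S := T) (by simp at hS; omega)
    obtain ⟨k, T'', rfl⟩ := exists_cons_of_card_pos (S := T') (by simp at hS; omega)
    obtain ⟨a, b, c, habc, heq⟩ := dep3 g h k
    obtain ⟨l, hcore, hle⟩ := mkCore (p := p) [(a, g), (b, h), (c, k)]
      (by rcases habc with ha | hb | hc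
          exacts [⟨(a, g), by simp, ha⟩, ⟨(b, h), by simp, hb⟩, ⟨(c, k), by simp, hc⟩])
      (by simpa [add_assoc] using heq)
    have hle2 : (↑(l.map Prod.snd) : Multiset (Fin 2 → ZMod p)) ≤ g ::ₘ h ::ₘ k ::ₘ T'' := by
      refine hle.trans ?_
      simp only [List.map_cons, List.map_nil]
      exact Multiset.cons_le_cons _ (Multiset.cons_le_cons _
        (Multiset.cons_le_cons _ (Multiset.zero_le _)))
    apply hasDisj_cons hcore hle2
    apply ih
    have hcard3 : Multiset.card (↑(l.map Prod.snd) : Multiset (Fin 2 → ZMod p)) ≤ 3 := by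
      simpa using Multiset.card_le_card hle
    rw [Multiset.card_sub hle2]
    simp only [Multiset.card_cons] at hS ⊢
    omega


lemma pair_pullback {α β : Type*} [DecidableEq β] {S : Multiset α} {f : α → β} {x : β}
    (h : 2 ≤ Multiset.count x (S.map f)) :
    ∃ g h', (g ::ₘ h' ::ₘ 0) ≤ S ∧ f g = x ∧ f h' = x := by
  have hx : x ∈ S.map f := Multiset.count_pos.mp (by omega)
  obtain ⟨g, hg, rfl⟩ := Multiset.mem_map.mp hx
  obtain ⟨T, rfl⟩ := Multiset.exists_cons_of_mem hg
  rw [Multiset.map_cons, Multiset.count_cons_self] at h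
  have hx2 : f g ∈ T.map f := Multiset.count_pos.mp (by omega)
  obtain ⟨h', hh', hfh⟩ := Multiset.mem_map.mp hx2
  obtain ⟨T', rfl⟩ := Multiset.exists_cons_of_mem hh'
  exact ⟨g, h', Multiset.cons_le_cons _ (Multiset.cons_le_cons _ (Multiset.zero_le _)),
    rfl, hfh⟩

lemma cross_of_feq {g h : Fin 2 → ZMod p}
    (heq : (if g 0 = 0 then (none : Option (ZMod p)) else some (g 1 * (g 0)⁻¹))
      = (if h 0 = 0 then none else some (h 1 * (h 0)⁻¹))) :
    cross g h = 0 := by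
  by_cases hg0 : g 0 = 0 <;> by_cases hh0 : h 0 = 0 <;> simp [hg0, hh0] at heq
  · unfold cross; rw [hg0, hh0]; ring
  · unfold cross
    field_simp at heq
    linear_combination -heq

lemma card_le_of_nonparallel {S : Multiset (Fin 2 → ZMod p)}
    (hnp : ∀ g h : Fin 2 → ZMod p, (g ::ₘ h ::ₘ 0) ≤ S → cross g h ≠ 0) :
    Multiset.card S ≤ p + 1 := by
  haveI : NeZero p := ⟨hp.out.pos.ne'⟩
  set f : (Fin 2 → ZMod p) → Option (ZMod p) :=
    fun g => if g 0 = 0 then none else some (g 1 * (g 0)⁻¹) with hf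
  have hnd : (S.map f).Nodup := by
    rw [Multiset.nodup_iff_count_le_one]
    intro x
    by_contra hcount
    obtain ⟨g, h', hle, hg, hh⟩ := pair_pullback (S := S) (f := f) (x := x) (by omega)
    exact hnp g h' hle (cross_of_feq (p := p) (hg.trans hh.symm))
  have h1 := Multiset.toFinset_card_eq_card_iff_nodup.mpr hnd
  have h2 := (S.map f).toFinset.card_le_univ
  rw [h1] at h2
  simpa [ZMod.card] using h2

lemma UB2 : ∀ (m : ℕ) (S : Multiset (Fin 2 → ZMod p)),
    2 * m + (p + 2) / 3 ≤ Multiset.card S →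
    HasDisjointWZeroSubsums (Wset p) S m := by
  intro m
  induction m with
  | zero => exact fun S _ => hasDisj_zero S
  | succ m ih =>
    intro S hS
    by_cases hm : m + 1 ≤ (p + 2) / 3
    · exact UB1 (m + 1) S (by omega)
    by_cases hz : (0 : Fin 2 → ZMod p) ∈ S
    · obtain ⟨l, hcore, hle⟩ := mkCore (p := p) [((1 : ZMod p), (0 : Fin 2 → ZMod p))]
        ⟨((1 : ZMod p), (0 : Fin 2 → ZMod p)), by simp, one_ne_zero⟩ (by simp)
      obtain ⟨T, rfl⟩ := Multiset.exists_cons_of_mem hz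
      have hle2 : (↑(l.map Prod.snd) : Multiset (Fin 2 → ZMod p)) ≤ (0 : Fin 2 → ZMod p) ::ₘ T := by
        refine hle.trans ?_
        simp only [List.map_cons, List.map_nil]
        exact Multiset.cons_le_cons _ (Multiset.zero_le _)
      apply hasDisj_cons hcore hle2
      apply ih
      have hc1 : Multiset.card (↑(l.map Prod.snd) : Multiset (Fin 2 → ZMod p)) ≤ 1 := by
        simpa using Multiset.card_le_card hle
      rw [Multiset.card_sub hle2]
      simp only [Multiset.card_cons] at hS ⊢
      omega
    by_cases hpar : ∃ g h : Fin 2 → ZMod p, (g ::ₘ h ::ₘ 0) ≤ S ∧ cross g h = 0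
    · obtain ⟨g, h, hgh, hcr⟩ := hpar
      have hgS : g ∈ S := Multiset.mem_of_le hgh (Multiset.mem_cons_self _ _)
      have hg0 : g ≠ 0 := fun h' => hz (h' ▸ hgS)
      obtain ⟨a, b, hab, heq⟩ := dep2 hg0 hcr
      obtain ⟨l, hcore, hle⟩ := mkCore (p := p) [(a, g), (b, h)]
        (by rcases hab with ha | hb; exacts [⟨(a, g), by simp, ha⟩, ⟨(b, h), by simp, hb⟩])
        (by simpa using heq)
      have hle2 : (↑(l.map Prod.snd) : Multiset (Fin 2 → ZMod p)) ≤ S := by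
        refine hle.trans ?_
        exact hgh
      apply hasDisj_cons hcore hle2
      apply ih
      have hc2 : Multiset.card (↑(l.map Prod.snd) : Multiset (Fin 2 → ZMod p)) ≤ 2 := by
        simpa using Multiset.card_le_card hle
      rw [Multiset.card_sub hle2]
      omega
    · exfalso
      push_neg at hpar
      have hcard := card_le_of_nonparallel (S := S) fun g h hle => hpar g h hle
      omega

lemma smul_eq_zero_iff' {G : Type*} [AddCommGroup G] [Module (ZMod p) G]
    {c : ZMod p} (hc : c ≠ 0) {g : G} (h : c • g = 0) : g = 0 := by
  have : g = c⁻¹ • (c • g) := by rw [← mul_smul, inv_mul_cancel₀ hc, one_smul]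
  rw [this, h, smul_zero]

lemma core_len2 {G : Type*} [AddCommGroup G] [Module (ZMod p) G] {l : List (ℤ × G)}
    {S : Multiset G} (hcore : Core (Wset p) l)
    (hle : (↑(l.map Prod.snd) : Multiset G) ≤ S) (h0 : ∀ g ∈ S, g ≠ (0 : G)) :
    2 ≤ l.length := by
  by_contra hlen
  have h1 : l.length = 1 := by
    have h0 : l.length ≠ 0 := fun h => hcore.1 (List.length_eq_zero_iff.mp h)
    omega
  obtain ⟨q, rfl⟩ := List.length_eq_one_iff.mp h1
  have hsum : q.1 • q.2 = 0 := by simpa using hcore.2.2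
  rw [← Int.cast_smul_eq_zsmul (ZMod p)] at hsum
  have hq2 : q.2 ∈ S := Multiset.mem_of_le hle (by simp)
  exact h0 q.2 hq2 (smul_eq_zero_iff' (wt_cast_ne_zero (hcore.2.1 q (by simp))) hsum)

lemma core_cross {l : List (ℤ × (Fin 2 → ZMod p))} (hcore : Core (Wset p) l)
    (hlen : l.length = 2) :
    ∃ a b : Fin 2 → ZMod p, l.map Prod.snd = [a, b] ∧ cross a b = 0 := by
  obtain ⟨q1, q2, rfl⟩ := List.length_eq_two.mp hlen
  refine ⟨q1.2, q2.2, rfl, ?_⟩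
  have hsum : q1.1 • q1.2 + q2.1 • q2.2 = 0 := by simpa using hcore.2.2
  rw [← Int.cast_smul_eq_zsmul (ZMod p) q1.1, ← Int.cast_smul_eq_zsmul (ZMod p) q2.1] at hsum
  set c1 : ZMod p := (q1.1 : ZMod p) with hc1
  set c2 : ZMod p := (q2.1 : ZMod p) with hc2
  have hc1ne : c1 ≠ 0 := wt_cast_ne_zero (hcore.2.1 q1 (by simp))
  have e0 : c1 * q1.2 0 + c2 * q2.2 0 = 0 := by
    have := congrFun hsum 0; simpa using this
  have e1 : c1 * q1.2 1 + c2 * q2.2 1 = 0 := by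
    have := congrFun hsum 1; simpa using this
  have key : c1 * cross q1.2 q2.2 = 0 := by
    unfold cross
    linear_combination q2.2 1 * e0 - q2.2 0 * e1
  rcases mul_eq_zero.mp key with h | h
  · exact absurd h hc1ne
  · exact h

lemma cross_comm (a b : Fin 2 → ZMod p) : cross a b = -cross b a := by
  unfold cross; ring

lemma cross_self (a : Fin 2 → ZMod p) : cross a a = 0 := by
  unfold cross; ring

lemma pairwise_of_pair_le {α : Type*} {V : List α} {R : α → α → Prop}
    (hsym : ∀ {x y : α}, R x y → R y x) (hpw : V.Pairwise R) {g h : α}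
    (hle : (g ::ₘ h ::ₘ 0 : Multiset α) ≤ ↑V) : R g h := by
  have hle' : (↑[g, h] : Multiset α) ≤ ↑V := hle
  obtain ⟨l', hperm, hsub⟩ := Multiset.coe_le.mp hle'
  have hpw' : List.Pairwise R [g, h] := (List.Perm.pairwise_iff hsym hperm).mp
    (hpw.sublist hsub)
  exact (List.pairwise_cons.mp hpw').1 h (by simp)

lemma le_sum_of_forall_le (ns : List ℕ) (k : ℕ) (h : ∀ n ∈ ns, k ≤ n) :
    k * ns.length ≤ ns.sum := by
  induction ns with
  | nil => simp
  | cons n ns ih =>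
    simp only [List.length_cons, List.sum_cons, Nat.mul_succ]
    have := ih (fun x hx => h x (List.mem_cons_of_mem _ hx))
    have := h n (by simp)
    omega

lemma elts_le_of_mem {G : Type*} [AddCommGroup G] {ls : List (List (ℤ × G))}
    {l : List (ℤ × G)} (hl : l ∈ ls) {S : Multiset G}
    (hsub : (↑(ls.flatten.map Prod.snd) : Multiset G) ≤ S) :
    (↑(l.map Prod.snd) : Multiset G) ≤ S :=
  (Multiset.coe_le.mpr ((List.sublist_flatten_of_mem hl).map Prod.snd).subperm).trans hsub

lemma flatten_card_le {G : Type*} [AddCommGroup G] {ls : List (List (ℤ × G))}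
    {S : Multiset G} (hsub : (↑(ls.flatten.map Prod.snd) : Multiset G) ≤ S) :
    ls.flatten.length ≤ Multiset.card S := by
  have := Multiset.card_le_card hsub
  rwa [Multiset.coe_card, List.length_map] at this

lemma LB_cp (m : ℕ) (hm : 1 ≤ m) :
    ¬ HasDisjointWZeroSubsums (Wset p) (Multiset.replicate (2 * m - 1) (1 : ZMod p)) m := by
  rintro ⟨ls, hlen, hcore, hsub⟩
  have hone : (1 : ZMod p) ≠ 0 := one_ne_zero
  have h2 : ∀ l ∈ ls, 2 ≤ l.length := by
    intro l hl
    refine core_len2 (hcore l hl) (elts_le_of_mem hl hsub) ?_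
    intro g hg
    rw [Multiset.eq_of_mem_replicate hg]
    exact hone
  have htot : 2 * m ≤ ls.flatten.length := by
    rw [List.length_flatten]
    have := le_sum_of_forall_le (ls.map List.length) 2 (by
      intro n hn
      obtain ⟨l, hl, rfl⟩ := List.mem_map.mp hn
      exact h2 l hl)
    simpa [hlen] using this
  have hcard := flatten_card_le hsub
  rw [Multiset.card_replicate] at hcard
  omega

/-- the standard vectors -/
def vfun (p : ℕ) (i : ℕ) : Fin 2 → ZMod p :=
  if i < p then ![1, (i : ZMod p)] else ![0, 1]

lemma vfun_ne_zero (i : ℕ) : vfun p i ≠ 0 := by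
  unfold vfun
  split_ifs with h
  · intro he
    have := congrFun he 0
    simp at this
  · intro he
    have := congrFun he 1
    simp at this

lemma vfun_cross {i j : ℕ} (hij : i < j) (hjp : j ≤ p) :
    cross (vfun p i) (vfun p j) ≠ 0 := by
  have hip : i < p := by omega
  unfold vfun cross
  rcases Nat.lt_or_ge j p with hj | hj
  · simp only [if_pos hip, if_pos hj]
    simp only [Matrix.cons_val_zero, Matrix.cons_val_one, Matrix.head_cons]
    intro h
    have h' : (i : ZMod p) = (j : ZMod p) := by
      have : (1 : ZMod p) * (j : ZMod p) - (i : ZMod p) * 1 = 0 := h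
      linear_combination -this
    have : i = j := by
      have hvi := ZMod.val_cast_of_lt hip
      have hvj := ZMod.val_cast_of_lt hj
      rw [← hvi, ← hvj, h']
    omega
  · have hjeq : ¬ j < p := by omega
    simp only [if_pos hip, if_neg hjeq]
    simp only [Matrix.cons_val_zero, Matrix.cons_val_one, Matrix.head_cons]
    intro h
    have : (1 : ZMod p) = 0 := by linear_combination h
    exact one_ne_zero this

lemma LB2 (m : ℕ) (hm : 1 ≤ m) (hmc : 3 * m ≤ p + 2) :
    ¬ HasDisjointWZeroSubsums (Wset p)
      (↑((List.range (3 * m - 1)).map (vfun p)) : Multiset (Fin 2 → ZMod p)) m := by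
  set V : List (Fin 2 → ZMod p) := (List.range (3 * m - 1)).map (vfun p) with hV
  have hnz : ∀ g ∈ (↑V : Multiset (Fin 2 → ZMod p)), g ≠ 0 := by
    intro g hg
    rw [Multiset.mem_coe, hV, List.mem_map] at hg
    obtain ⟨i, _, rfl⟩ := hg
    exact vfun_ne_zero i
  have hpw : V.Pairwise (fun a b => cross a b ≠ 0) := by
    rw [hV, List.pairwise_map]
    refine (List.pairwise_lt_range (n := 3 * m - 1)).imp_of_mem ?_
    intro i j hi hj hij
    rw [List.mem_range] at hj
    exact vfun_cross hij (by omega)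
  rintro ⟨ls, hlen, hcore, hsub⟩
  have h3 : ∀ l ∈ ls, 3 ≤ l.length := by
    intro l hl
    have hle := elts_le_of_mem hl hsub
    have h2 := core_len2 (hcore l hl) hle hnz
    rcases Nat.lt_or_ge l.length 3 with h | h
    · exfalso
      have hl2 : l.length = 2 := by omega
      obtain ⟨a, b, hab, hcr⟩ := core_cross (hcore l hl) hl2
      rw [hab] at hle
      have hR := pairwise_of_pair_le (R := fun a b => cross a b ≠ 0)
        (fun {x y} hxy h => hxy (by rw [cross_comm, h, neg_zero])) hpw hle
      exact hR hcr
    · exact h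
  have htot : 3 * m ≤ ls.flatten.length := by
    rw [List.length_flatten]
    have := le_sum_of_forall_le (ls.map List.length) 3 (by
      intro n hn
      obtain ⟨l, hl, rfl⟩ := List.mem_map.mp hn
      exact h3 l hl)
    simpa [hlen] using this
  have hcard := flatten_card_le hsub
  rw [Multiset.coe_card, hV, List.length_map, List.length_range] at hcard
  omega

lemma filter_flatten_sublist {α : Type*} (ls : List (List α)) (q : List α → Bool) :
    (ls.filter q).flatten.Sublist ls.flatten := by
  induction ls with
  | nil => simp
  | cons l ls ih =>
    by_cases h : q l
    · simpa [List.filter_cons, h] using ih.append_left l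
    · simp only [List.filter_cons, h]
      exact ih.trans (List.sublist_append_right l ls.flatten)

lemma sum_split {α : Type*} (ls : List (List α)) (q : List α → Bool)
    (h2 : ∀ l ∈ ls, 2 ≤ l.length) (h3 : ∀ l ∈ ls, ¬ q l = true → 3 ≤ l.length) :
    2 * (ls.filter q).length + 3 * (ls.filter (fun l => !q l)).length
      ≤ ls.flatten.length := by
  induction ls with
  | nil => simp
  | cons l ls ih =>
    have ih' := ih (fun x hx => h2 x (List.mem_cons_of_mem _ hx))
      (fun x hx => h3 x (List.mem_cons_of_mem _ hx))
    by_cases h : q l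
    · have := h2 l (by simp)
      simp only [List.length_flatten] at ih' ⊢
      simp [List.filter_cons, h]
      omega
    · have := h3 l (by simp) h
      simp only [List.length_flatten] at ih' ⊢
      simp [List.filter_cons, h]
      omega

lemma filter_lengths {α : Type*} (ls : List α) (q : α → Bool) :
    (ls.filter q).length + (ls.filter (fun l => !q l)).length = ls.length := by
  induction ls with
  | nil => simp
  | cons l ls ih =>
    by_cases h : q l <;> simp [List.filter_cons, h] <;> omega

lemma LB3 (m : ℕ) (hmc : (p + 2) / 3 < m) :
    ¬ HasDisjointWZeroSubsums (Wset p)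
      (↑(((List.range (3 * ((p + 2) / 3) - 2)).map (fun i => vfun p (i + 1)))
          ++ List.replicate (2 * (m - (p + 2) / 3) + 1) (vfun p 0))
        : Multiset (Fin 2 → ZMod p)) m := by
  have hp2 : 2 ≤ p := hp.out.two_le
  set c : ℕ := (p + 2) / 3 with hc
  have hc1 : 1 ≤ c := by omega
  have hc3 : 3 * c ≤ p + 2 := by omega
  have hcp : p ≤ 3 * c := by omega
  set v1 : Fin 2 → ZMod p := vfun p 0 with hv1
  set T : List (Fin 2 → ZMod p) := (List.range (3 * c - 2)).map (fun i => vfun p (i + 1))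
    with hT
  set rep : List (Fin 2 → ZMod p) := List.replicate (2 * (m - c) + 1) v1 with hrep
  set L : List (Fin 2 → ZMod p) := T ++ rep with hL
  set S : Multiset (Fin 2 → ZMod p) := ↑L with hS
  -- basic facts
  have hnz : ∀ g ∈ S, g ≠ 0 := by
    intro g hg
    rw [hS, Multiset.mem_coe, hL, List.mem_append] at hg
    rcases hg with hg | hg
    · rw [hT, List.mem_map] at hg
      obtain ⟨i, _, rfl⟩ := hg
      exact vfun_ne_zero _
    · rw [hrep] at hg
      rw [List.eq_of_mem_replicate hg]
      exact vfun_ne_zero _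
  have hTnP : ∀ g ∈ T, cross v1 g ≠ 0 := by
    intro g hg
    rw [hT, List.mem_map] at hg
    obtain ⟨i, hi, rfl⟩ := hg
    rw [List.mem_range] at hi
    exact vfun_cross (by omega) (by omega)
  set R : (Fin 2 → ZMod p) → (Fin 2 → ZMod p) → Prop :=
    fun a b => cross a b ≠ 0 ∨ (cross v1 a = 0 ∧ cross v1 b = 0) with hR
  have hsym : ∀ {x y : Fin 2 → ZMod p}, R x y → R y x := by
    intro x y hxy
    rcases hxy with h | h
    · exact Or.inl (fun h' => h (by rw [cross_comm, h', neg_zero]))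
    · exact Or.inr ⟨h.2, h.1⟩
  have hpw : L.Pairwise R := by
    rw [hL, List.pairwise_append]
    refine ⟨?_, ?_, ?_⟩
    · rw [hT, List.pairwise_map]
      refine (List.pairwise_lt_range (n := 3 * c - 2)).imp_of_mem ?_
      intro i j hi hj hij
      rw [List.mem_range] at hj
      exact Or.inl (vfun_cross (by omega) (by omega))
    · rw [hrep]
      rw [List.pairwise_replicate]
      exact Or.inr (Or.inr ⟨cross_self _, cross_self _⟩)
    · intro a ha b hb
      rw [hrep] at hb
      rw [List.eq_of_mem_replicate hb]
      refine Or.inl ?_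
      intro h'
      exact hTnP a ha (by rw [cross_comm, h', neg_zero])
  -- the filter count
  have hfilter : Multiset.card (S.filter (fun g => cross v1 g = 0)) = 2 * (m - c) + 1 := by
    rw [hS, Multiset.filter_coe, hL, List.filter_append]
    have h1 : T.filter (fun g => decide (cross v1 g = 0)) = [] := by
      rw [List.filter_eq_nil_iff]
      intro a ha
      simpa using hTnP a ha
    have h2 : rep.filter (fun g => decide (cross v1 g = 0)) = rep := by
      rw [List.filter_eq_self]
      intro a ha
      rw [hrep] at ha
      rw [List.eq_of_mem_replicate ha]
      simpa using cross_self v1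
    rw [Multiset.coe_card]
    simp only [h1, h2]
    rw [List.nil_append, hrep, List.length_replicate]
  -- main argument
  rintro ⟨ls, hlen, hcore, hsub⟩
  have h2 : ∀ l ∈ ls, 2 ≤ l.length := fun l hl =>
    core_len2 (hcore l hl) (elts_le_of_mem hl hsub) hnz
  set qb : List (ℤ × (Fin 2 → ZMod p)) → Bool :=
    fun l => decide (∀ qq ∈ l, cross v1 qq.2 = 0) with hqb
  have h3 : ∀ l ∈ ls, ¬ qb l = true → 3 ≤ l.length := by
    intro l hl hq
    have hle := elts_le_of_mem hl hsub
    rcases Nat.lt_or_ge l.length 3 with h | h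
    swap; · exact h
    exfalso
    have hl2 : l.length = 2 := by
      have := h2 l hl; omega
    obtain ⟨a, b, hab, hcr⟩ := core_cross (hcore l hl) hl2
    rw [hab] at hle
    have hRab : R a b := pairwise_of_pair_le hsym hpw hle
    rcases hRab with h' | h'
    · exact h' hcr
    · apply hq
      rw [hqb]
      simp only [decide_eq_true_eq]
      intro qq hqq
      have : qq.2 ∈ l.map Prod.snd := List.mem_map_of_mem (f := Prod.snd) hqq
      rw [hab] at this
      simp only [List.mem_cons, List.mem_singleton, List.not_mem_nil, or_false] at this
      rcases this with rfl | rfl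
      · exact h'.1
      · exact h'.2
  -- counting
  have hAle : (↑(((ls.filter qb).flatten).map Prod.snd) : Multiset (Fin 2 → ZMod p))
      ≤ S.filter (fun g => cross v1 g = 0) := by
    rw [Multiset.le_filter]
    constructor
    · exact (Multiset.coe_le.mpr
        ((filter_flatten_sublist ls qb).map Prod.snd).subperm).trans hsub
    · intro a ha
      rw [Multiset.mem_coe, List.mem_map] at ha
      obtain ⟨qq, hqq, rfl⟩ := ha
      rw [List.mem_flatten] at hqq
      obtain ⟨l, hl, hqql⟩ := hqq
      rw [List.mem_filter] at hl
      have := of_decide_eq_true hl.2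
      exact this qq hqql
  have hsumA : ((ls.filter qb).flatten).length ≤ 2 * (m - c) + 1 := by
    have := Multiset.card_le_card hAle
    rw [Multiset.coe_card, List.length_map, hfilter] at this
    exact this
  have hA2 : 2 * (ls.filter qb).length ≤ ((ls.filter qb).flatten).length := by
    rw [List.length_flatten]
    have := le_sum_of_forall_le ((ls.filter qb).map List.length) 2 (by
      intro n hn
      obtain ⟨l, hl, rfl⟩ := List.mem_map.mp hn
      exact h2 l (List.mem_of_mem_filter hl))
    simpa using this
  have hsplit := sum_split ls qb h2 h3
  have hpart := filter_lengths ls qb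
  have hcardS : Multiset.card S = (3 * c - 2) + (2 * (m - c) + 1) := by
    rw [hS, Multiset.coe_card, hL, List.length_append, hT, List.length_map,
      List.length_range, hrep, List.length_replicate]
  have hflat := flatten_card_le hsub
  rw [hcardS] at hflat
  omega

end Stmt17Aux

namespace Stmt17Aux

lemma DW_eq_of {G : Type*} [AddCommGroup G] {W : Set ℤ} {m n : ℕ}
    (h1 : ∀ S : Multiset G, n ≤ Multiset.card S → HasDisjointWZeroSubsums W S m)
    (S₀ : Multiset G) (h2 : Multiset.card S₀ + 1 = n)
    (h3 : ¬ HasDisjointWZeroSubsums W S₀ m) :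
    DW W G m = n := by
  apply le_antisymm
  · exact Nat.sInf_le h1
  · apply le_csInf ⟨n, by exact h1⟩
    intro b hb
    by_contra hbn
    push_neg at hbn
    exact h3 (hb S₀ (by omega))

end Stmt17Aux

/-- `D_{A,m}(C_p) = 2m`; and `D_{A,m}(C_p²) = 3m` for `m ≤ ⌈p/3⌉`
while `D_{A,m}(C_p²) = 2m + ⌈p/3⌉` for `m > ⌈p/3⌉` (here `⌈p/3⌉ = (p+2)/3`). -/
theorem stmt17 (p : ℕ) (hp : p.Prime) :
    (∀ m : ℕ, 1 ≤ m → DW (Set.Icc 1 ((p : ℤ) - 1)) (ZMod p) m = 2 * m) ∧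
    (∀ m : ℕ, 1 ≤ m → m ≤ (p + 2) / 3 →
      DW (Set.Icc 1 ((p : ℤ) - 1)) (Fin 2 → ZMod p) m = 3 * m) ∧
    (∀ m : ℕ, (p + 2) / 3 < m →
      DW (Set.Icc 1 ((p : ℤ) - 1)) (Fin 2 → ZMod p) m = 2 * m + (p + 2) / 3) := by
  haveI : Fact p.Prime := ⟨hp⟩
  have hp2 : 2 ≤ p := hp.two_le
  refine ⟨?_, ?_, ?_⟩
  · intro m hm
    refine Stmt17Aux.DW_eq_of (fun S hS => Stmt17Aux.UB_cp m S hS)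
      (Multiset.replicate (2 * m - 1) (1 : ZMod p)) ?_ (Stmt17Aux.LB_cp m hm)
    rw [Multiset.card_replicate]
    omega
  · intro m hm hm2
    have h3 : 3 * m ≤ p + 2 := by omega
    refine Stmt17Aux.DW_eq_of (fun S hS => Stmt17Aux.UB1 m S (by omega))
      (↑((List.range (3 * m - 1)).map (Stmt17Aux.vfun p))) ?_ (Stmt17Aux.LB2 m hm h3)
    rw [Multiset.coe_card, List.length_map, List.length_range]
    omega
  · intro m hm
    refine Stmt17Aux.DW_eq_of (fun S hS => Stmt17Aux.UB2 m S (by omega))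
      (↑(((List.range (3 * ((p + 2) / 3) - 2)).map (fun i => Stmt17Aux.vfun p (i + 1)))
          ++ List.replicate (2 * (m - (p + 2) / 3) + 1) (Stmt17Aux.vfun p 0))) ?_
      (Stmt17Aux.LB3 m hm)
    rw [Multiset.coe_card, List.length_append, List.length_map, List.length_range,
      List.length_replicate]
    omega
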